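/- Let (G_i)_{i∈I} be a family of groups and G their free product, with canonical injections ι_i : G_i → G. If w ∈ G satisfies w² ≠ 1 and w² lies in the image of ι_i for some i, then w itself lies in the image of ι_i. -/

import Mathlib

open Monoid Monoid.CoprodI

namespace Stmt11

variable {ι : Type*} {G : ι → Type*} [∀ i, Group (G i)]

/-- product of the letters of a list -/
def P (l : List (Σ i, G i)) : CoprodI G :=
  (l.map fun p => CoprodI.of p.2).prod

@[simp] lemma P_nil : P ([] : List (Σ i, G i)) = 1 := rfl

@[simp] lemma P_cons (p : Σ i, G i) (l : List (Σ i, G i)) :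
    P (p :: l) = CoprodI.of p.2 * P l := by
  simp [P]

@[simp] lemma P_append (l₁ l₂ : List (Σ i, G i)) : P (l₁ ++ l₂) = P l₁ * P l₂ := by
  simp [P]

/-- a reduced list -/
def Red (l : List (Σ i, G i)) : Prop :=
  (∀ p ∈ l, p.2 ≠ 1) ∧ l.IsChain fun p q => p.1 ≠ q.1

lemma word_prod_eq (W : Word G) : W.prod = P W.toList := rfl

lemma P_inj {l₁ l₂ : List (Σ i, G i)} (h₁ : Red l₁) (h₂ : Red l₂) (h : P l₁ = P l₂) :
    l₁ = l₂ := by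
  classical
  have : (⟨l₁, h₁.1, h₁.2⟩ : Word G) = ⟨l₂, h₂.1, h₂.2⟩ := by
    have := Word.equiv (M := G) |>.symm.injective (a₁ := ⟨l₁, h₁.1, h₁.2⟩)
      (a₂ := ⟨l₂, h₂.1, h₂.2⟩)
    apply this
    exact h
  simpa using congrArg Word.toList this

lemma exists_red (w : CoprodI G) : ∃ l, Red l ∧ P l = w := by
  classical
  exact ⟨(Word.equiv w).toList, ⟨(Word.equiv w).ne_one, (Word.equiv w).chain_ne⟩,
    (Word.equiv (M := G)).symm_apply_apply w⟩

/-- reverse with inverted letters -/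
def invRev (l : List (Σ i, G i)) : List (Σ i, G i) :=
  l.reverse.map fun p => ⟨p.1, p.2⁻¹⟩

@[simp] lemma P_invRev (l : List (Σ i, G i)) : P (invRev l) = (P l)⁻¹ := by
  induction l with
  | nil => simp [invRev]
  | cons p t ih =>
    have : invRev (p :: t) = invRev t ++ [⟨p.1, p.2⁻¹⟩] := by
      simp [invRev]
    rw [this, P_append, ih]
    simp [P, mul_comm]

@[simp] lemma head?_invRev (l : List (Σ i, G i)) :
    (invRev l).head? = l.getLast?.map fun p => (⟨p.1, p.2⁻¹⟩ : Σ i, G i) := by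
  simp [invRev, List.head?_reverse]

@[simp] lemma getLast?_invRev (l : List (Σ i, G i)) :
    (invRev l).getLast? = l.head?.map fun p => (⟨p.1, p.2⁻¹⟩ : Σ i, G i) := by
  simp [invRev, List.getLast?_map, List.getLast?_reverse]

lemma invRev_red {l : List (Σ i, G i)} (h : Red l) : Red (invRev l) := by
  obtain ⟨h1, h2⟩ := h
  constructor
  · intro p hp
    simp only [invRev, List.mem_map, List.mem_reverse] at hp
    obtain ⟨q, hq, rfl⟩ := hp
    simpa using h1 q hq
  · rw [invRev, List.isChain_map, List.isChain_reverse]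
    exact h2.imp fun a b h => by simpa [flip] using Ne.symm h

lemma conj_red {C : List (Σ i, G i)} {i : ι} {g : G i} (hC : Red C)
    (hlast : ∀ p ∈ C.getLast?, p.1 ≠ i) (hg : g ≠ 1) :
    Red (C ++ ⟨i, g⟩ :: invRev C) := by
  obtain ⟨h1, h2⟩ := hC
  constructor
  · intro p hp
    rcases List.mem_append.1 hp with hp | hp
    · exact h1 p hp
    · rcases List.mem_cons.1 hp with rfl | hp
      · exact hg
      · exact (invRev_red ⟨h1, h2⟩).1 p hp
  · rw [List.isChain_append]
    refine ⟨h2, ?_, ?_⟩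
    · rw [List.isChain_cons]
      refine ⟨?_, (invRev_red ⟨h1, h2⟩).2⟩
      intro y hy
      simp only [head?_invRev, Option.mem_def, Option.map_eq_some_iff] at hy
      obtain ⟨q, hq, rfl⟩ := hy
      exact fun hiq => (hlast q hq) hiq.symm
    · intro x hx y hy
      simp only [List.head?_cons, Option.mem_def, Option.some.injEq] at hy
      subst hy
      exact hlast x hx

lemma P_conj {C : List (Σ i, G i)} {i : ι} (g : G i) :
    P (C ++ ⟨i, g⟩ :: invRev C) = P C * CoprodI.of g * (P C)⁻¹ := by
  simp [mul_assoc]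

lemma key : ∀ (n : ℕ) (L : List (Σ i, G i)), L.length ≤ n → Red L →
    ∀ (C : List (Σ i, G i)) (i : ι) (g : G i), g ≠ 1 → Red C →
    (∀ p ∈ C.getLast?, p.1 ≠ i) →
    P L * P L = P C * CoprodI.of g * (P C)⁻¹ →
    ∃ x : G i, P L = P C * CoprodI.of x * (P C)⁻¹ := by
  intro n
  induction n with
  | zero =>
    intro L hlen hL C i g hg hC hCi heq
    have hnil : L = [] := List.length_eq_zero_iff.1 (Nat.le_zero.1 hlen)
    subst hnil
    exfalso
    apply hg
    apply CoprodI.of_injective i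
    simp only [P_nil, one_mul] at heq
    have h1 : CoprodI.of g = 1 := by
      have h2 : P C * CoprodI.of g * (P C)⁻¹ = 1 := heq.symm
      have := congrArg (fun z => (P C)⁻¹ * z * P C) h2
      simpa [mul_assoc] using this
    rw [h1, map_one]
  | succ n ih =>
    intro L hlen hL C i g hg hC hCi heq
    by_cases hsmall : L.length ≤ n
    · exact ih L hsmall hL C i g hg hC hCi heq
    have hlen' : L.length = n + 1 := by omega
    match L, hL, hlen', heq with
    | [], _, hlen', _ => simp at hlen'
    | ⟨a, h⟩ :: LT, hL, hlen', heq =>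
      rcases LT.eq_nil_or_concat with rfl | ⟨M, q, rfl⟩
      · -- singleton case
        by_cases hy : h * h = 1
        · exfalso
          apply hg
          have h2 : P C * CoprodI.of g * (P C)⁻¹ = 1 := by
            rw [← heq]; simp [P, ← map_mul, hy]
          have := congrArg (fun z => (P C)⁻¹ * z * P C) h2
          have h3 : CoprodI.of g = 1 := by simpa [mul_assoc] using this
          apply CoprodI.of_injective i
          rw [h3, map_one]
        · have hred1 : Red [(⟨a, h * h⟩ : Σ i, G i)] := ⟨by simpa using hy, List.isChain_singleton _⟩
          have E := P_inj hred1 (conj_red hC hCi hg) (by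
            rw [P_conj]
            rw [← heq]
            simp [P, ← map_mul, mul_assoc])
          have hlenC : C = [] := by
            have := congrArg List.length E
            simp [invRev] at this
            exact List.length_eq_zero_iff.1 (by omega)
          subst hlenC
          simp only [List.nil_append, invRev, List.reverse_nil, List.map_nil] at E
          have E2 : (⟨a, h * h⟩ : Σ i, G i) = ⟨i, g⟩ := by
            injection E with E2 _
          obtain ⟨rfl, hE⟩ := Sigma.mk.inj_iff.1 E2
          exact ⟨h, by simp [P]⟩
      obtain ⟨b, l⟩ := q
      simp only [List.concat_eq_append] at hL hlen' heq ⊢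
      -- L = ⟨a,h⟩ :: M ++ [⟨b,l⟩]
      have hchain := hL.2
      rw [List.isChain_cons] at hchain
      obtain ⟨hhd, hchain2⟩ := hchain
      rw [List.isChain_append] at hchain2
      obtain ⟨hchM, -, hbound⟩ := hchain2
      have hne1 := hL.1
      have hh1 : h ≠ 1 := hne1 ⟨a, h⟩ (by simp)
      have hl1 : l ≠ 1 := hne1 ⟨b, l⟩ (by simp)
      have hMred : Red M := ⟨fun p hp => hne1 p (by simp [hp]), hchM⟩
      have hlastM : ∀ x ∈ M.getLast?, x.1 ≠ b := by
        intro x hx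
        exact hbound x hx ⟨b, l⟩ (by simp)
      have hPL : P (⟨a, h⟩ :: (M ++ [⟨b, l⟩])) = CoprodI.of h * P M * CoprodI.of l := by
        simp [P_append, mul_assoc]
      by_cases hab : a = b
      · subst hab
        -- M nonempty
        have hMne : M ≠ [] := by
          rintro rfl
          exact hhd ⟨a, l⟩ (by simp) rfl
        have hheadM : ∀ y ∈ M.head?, a ≠ y.1 := by
          intro y hy
          apply hhd
          rw [List.head?_append, hy]
          rfl
        by_cases hlh : l * h = 1
        · -- cancellation case
          have hl : l = h⁻¹ := eq_inv_of_mul_eq_one_left hlh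
          subst hl
          have hofinv : (CoprodI.of (h⁻¹) : CoprodI G) = (CoprodI.of h)⁻¹ := map_inv _ _
          have hmm : P M * P M =
              (CoprodI.of h⁻¹ * P C) * CoprodI.of g * (CoprodI.of h⁻¹ * P C)⁻¹ := by
            rw [hPL] at heq
            rw [hofinv] at heq ⊢
            have := congrArg (fun z => (CoprodI.of h)⁻¹ * z * CoprodI.of h) heq
            beta_reduce at this
            calc P M * P M
                = (CoprodI.of h)⁻¹ * (CoprodI.of h * P M * (CoprodI.of h)⁻¹ *
                    (CoprodI.of h * P M * (CoprodI.of h)⁻¹)) * CoprodI.of h := by group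
              _ = (CoprodI.of h)⁻¹ * (P C * CoprodI.of g * (P C)⁻¹) * CoprodI.of h := by
                  rw [heq]
              _ = (CoprodI.of h)⁻¹ * P C * CoprodI.of g * ((CoprodI.of h)⁻¹ * P C)⁻¹ := by group
          by_cases hspec : C = [] ∧ a = i
          · obtain ⟨rfl, rfl⟩ := hspec
            have hg2 : h⁻¹ * g * h ≠ 1 := by
              intro hcon
              apply hg
              have := congrArg (fun z => h * z * h⁻¹) hcon
              simpa [mul_assoc] using this
            obtain ⟨x, hx⟩ := ih M (by have hx := hlen'; simp only [List.length_cons, List.length_append,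
                List.length_singleton] at hx; omega) hMred [] a (h⁻¹ * g * h) hg2
              ⟨by simp, List.isChain_nil⟩ (by simp) (by
                rw [hmm]
                simp [map_mul, mul_assoc])
            refine ⟨h * x * h⁻¹, ?_⟩
            rw [hPL, hx]
            simp [map_mul, mul_assoc]
          · have hex : ∃ C₂, Red C₂ ∧ (∀ p ∈ C₂.getLast?, p.1 ≠ i) ∧
                P C₂ = CoprodI.of h⁻¹ * P C := by
              match C, hC, hCi, hspec with
              | [], _, _, hspec =>
                have hai : a ≠ i := fun hh => hspec ⟨rfl, hh⟩
                exact ⟨[⟨a, h⁻¹⟩], ⟨by simpa using hh1, List.isChain_singleton _⟩,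
                  by simpa using hai, by simp⟩
              | ⟨a', c₀⟩ :: C'', hC, hCi, _ =>
                have hCne1 := hC.1
                have hCch := hC.2
                rw [List.isChain_cons] at hCch
                by_cases haa : a = a'
                · subst haa
                  by_cases hm0 : h⁻¹ * c₀ = 1
                  · refine ⟨C'', ⟨fun p hp => hCne1 p (by simp [hp]), hCch.2⟩, ?_, ?_⟩
                    · intro p hp
                      apply hCi
                      cases C'' with
                      | nil => simp at hp
                      | cons e' C₃ => rwa [List.getLast?_cons_cons]
                    · have : (CoprodI.of (h⁻¹ * c₀) : CoprodI G) = 1 := by rw [hm0, map_one]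
                      simp only [P_cons]
                      rw [← mul_assoc, ← map_mul, hm0, map_one, one_mul]
                  · refine ⟨⟨a, h⁻¹ * c₀⟩ :: C'',
                      ⟨?_, List.isChain_cons.2 ⟨hCch.1, hCch.2⟩⟩, ?_, ?_⟩
                    · rintro p hp
                      rcases List.mem_cons.1 hp with rfl | hp
                      · exact hm0
                      · exact hCne1 p (by simp [hp])
                    · intro p hp
                      cases C'' with
                      | nil =>
                        simp only [List.getLast?_singleton, Option.mem_def,
                          Option.some.injEq] at hp
                        subst hp
                        simpa using hCi ⟨a, c₀⟩ (by simp)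
                      | cons e' C₃ =>
                        apply hCi
                        rwa [List.getLast?_cons_cons] at hp ⊢
                    · simp only [P_cons]
                      rw [map_mul, mul_assoc]
                · refine ⟨⟨a, h⁻¹⟩ :: ⟨a', c₀⟩ :: C'',
                    ⟨?_, List.isChain_cons.2 ⟨by simpa using haa, hC.2⟩⟩, ?_, by simp⟩
                  · rintro p hp
                    rcases List.mem_cons.1 hp with rfl | hp
                    · simpa using hh1
                    · exact hCne1 p hp
                  · intro p hp
                    apply hCi
                    rwa [List.getLast?_cons_cons] at hp
            obtain ⟨C₂, hC₂, hC₂i, hPC₂⟩ := hex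
            obtain ⟨x, hx⟩ := ih M (by have hx := hlen'; simp only [List.length_cons, List.length_append,
                List.length_singleton] at hx; omega) hMred C₂ i g hg hC₂ hC₂i
              (by rw [hPC₂]; exact hmm)
            refine ⟨x, ?_⟩
            rw [hPL, hx, hPC₂, hofinv]
            group
        · -- no cancellation: contradiction
          exfalso
          have hchainMq : List.Chain' (fun p q : Σ i, G i => p.1 ≠ q.1) (M ++ [⟨a, l⟩]) :=
            List.isChain_append.2 ⟨hchM, List.isChain_singleton _, hbound⟩
          have hZred : Red (⟨a, h⟩ :: (M ++ ⟨a, l * h⟩ :: (M ++ [⟨a, l⟩]))) := by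
            constructor
            · intro p hp
              simp only [List.mem_cons, List.mem_append] at hp
              rcases hp with rfl | hp | rfl | hp | rfl | hp
              · exact hh1
              · exact hMred.1 p hp
              · exact hlh
              · exact hMred.1 p hp
              · exact hl1
              · simp at hp
            · rw [List.isChain_cons]
              constructor
              · intro y hy
                rw [List.head?_append_of_ne_nil _ hMne] at hy
                exact hheadM y hy
              · rw [List.isChain_append]
                refine ⟨hchM, ?_, ?_⟩
                · rw [List.isChain_cons]
                  constructor
                  · intro y hy
                    rw [List.head?_append_of_ne_nil _ hMne] at hy
                    exact hheadM y hy
                  · exact hchainMq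
                · intro x hx y hy
                  simp only [List.head?_cons, Option.mem_def, Option.some.injEq] at hy
                  subst hy
                  exact hlastM x hx
          have hPZ1 : P (⟨a, h⟩ :: (M ++ ⟨a, l * h⟩ :: (M ++ [⟨a, l⟩]))) =
              P (⟨a, h⟩ :: (M ++ [⟨a, l⟩])) * P (⟨a, h⟩ :: (M ++ [⟨a, l⟩])) := by
            simp [P_append, map_mul, mul_assoc]
          have E := P_inj hZred (conj_red hC hCi hg) (by rw [hPZ1, heq, P_conj])
          match C, hC, hCi, E with
          | [], _, _, E =>
            have := congrArg List.length E
            simp only [List.length_append, List.length_cons, invRev, List.length_map,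
              List.length_reverse, List.length_nil, List.nil_append] at this
            omega
          | ⟨a', c'⟩ :: C'', hC, hCi, E =>
            have Eh := congrArg List.head? E
            simp only [List.head?_cons, List.cons_append, Option.some.injEq] at Eh
            obtain ⟨rfl, hac⟩ := Sigma.mk.inj_iff.1 Eh
            have hac' : h = c' := eq_of_heq hac
            subst hac'
            have hinvne : invRev (⟨a, h⟩ :: C'') ≠ [] := by simp [invRev]
            have hL1 : (⟨a, h⟩ :: (M ++ ⟨a, l * h⟩ :: (M ++ [⟨a, l⟩]))).getLast?
                = some ⟨a, l⟩ := by
              rw [← List.cons_append, List.getLast?_append_cons, ← List.cons_append,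
                List.getLast?_append_cons]
              rfl
            have hR1 : ((⟨a, h⟩ :: C'') ++ ⟨i, g⟩ :: invRev (⟨a, h⟩ :: C'')).getLast?
                = some ⟨a, h⁻¹⟩ := by
              rw [List.getLast?_append_cons]
              have h5 : (⟨i, g⟩ :: invRev (⟨a, h⟩ :: C'') : List (Σ i, G i))
                  = [⟨i, g⟩] ++ invRev (⟨a, h⟩ :: C'') := rfl
              rw [h5, List.getLast?_append_of_ne_nil _ hinvne, getLast?_invRev]
              rfl
            have E3 := (hL1.symm.trans (congrArg List.getLast? E)).trans hR1
            simp only [Option.some.injEq] at E3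
            obtain ⟨-, hE3⟩ := Sigma.mk.inj_iff.1 E3
            exact hlh (by rw [eq_of_heq hE3]; simp)
      · -- a ≠ b: parity contradiction
        exfalso
        have hZred : Red ((⟨a, h⟩ :: (M ++ [⟨b, l⟩])) ++ (⟨a, h⟩ :: (M ++ [⟨b, l⟩]))) := by
          constructor
          · intro p hp
            rcases List.mem_append.1 hp with hp | hp <;> exact hL.1 p hp
          · rw [List.isChain_append]
            refine ⟨hL.2, hL.2, ?_⟩
            intro x hx y hy
            simp only [List.head?_cons, Option.mem_def, Option.some.injEq] at hy
            subst hy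
            have hx1 : (⟨a, h⟩ :: (M ++ [⟨b, l⟩])).getLast? = some ⟨b, l⟩ := by
              rw [← List.cons_append, List.getLast?_append_cons]
              rfl
            rw [hx1] at hx
            simp only [Option.mem_def, Option.some.injEq] at hx
            subst hx
            exact fun hh => hab hh.symm
        have E := P_inj hZred (conj_red hC hCi hg)
          (by rw [P_append, heq, P_conj])
        have := congrArg List.length E
        simp only [List.length_append, List.length_cons, invRev, List.length_map,
          List.length_reverse] at this
        omega

end Stmt11

/-- In a free product of groups, if `w² ≠ 1` and `w²` lies in the `i`-th free
factor, then `w` lies in the `i`-th free factor. -/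
theorem stmt_11 {ι : Type*} (G : ι → Type*) [∀ i, Group (G i)] (i : ι)
    (w : Monoid.CoprodI G) (hw : w ^ 2 ≠ 1)
    (h : w ^ 2 ∈ (Monoid.CoprodI.of : G i →* Monoid.CoprodI G).range) :
    w ∈ (Monoid.CoprodI.of : G i →* Monoid.CoprodI G).range := by
  obtain ⟨g, hg⟩ := h
  have hg1 : g ≠ 1 := by
    rintro rfl
    apply hw
    rw [← hg, map_one]
  obtain ⟨L, hL, hPL⟩ := Stmt11.exists_red w
  obtain ⟨x, hx⟩ := Stmt11.key L.length L le_rfl hL [] i g hg1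
    ⟨by simp, List.isChain_nil⟩ (by simp)
    (by rw [hPL, ← pow_two, hg]; simp)
  exact ⟨x, by rw [← hPL, hx]; simp⟩
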